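/- Let R be a nonzero (not necessarily commutative) ring with identity such that for every subset S ⊆ R there exists a polynomial f ∈ R[X] with f(r) = 1 when r ∈ S and f(r) = 0 when r ∉ S (for all r ∈ R). Then R is a finite field, i.e., R is finite, multiplication on R is commutative, and every nonzero element of R is a unit. -/
import Mathlib


/-- **Proposition 1.3.** Let `R` be a nonzero (not necessarily commutative) ring with identity
such that every characteristic (indicator) function of a subset of `R` is given by a polynomial
with coefficients in `R`. Then `R` is a finite field. -/
theorem stmt_2 {R : Type*} [Ring R] [Nontrivial R]
    (h : ∀ S : Set R, ∃ f : Polynomial R,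
      ∀ r : R, (r ∈ S → f.eval r = 1) ∧ (r ∉ S → f.eval r = 0)) :
    Finite R ∧ (∀ x y : R, x * y = y * x) ∧ (∀ x : R, x ≠ 0 → IsUnit x) := by
  classical
  -- Step 1: R is finite, by a cardinality argument.
  have hfin : Finite R := by
    by_contra hinf
    rw [not_finite_iff_infinite] at hinf
    -- choose a polynomial for each subset
    choose F hF using h
    have hinj : Function.Injective F := by
      intro S T hST
      ext r
      constructor
      · intro hr
        by_contra hrT
        have h1 := (hF S r).1 hr
        have h0 := (hF T r).2 hrT
        rw [hST, h0] at h1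
        exact zero_ne_one h1
      · intro hr
        by_contra hrS
        have h1 := (hF T r).1 hr
        have h0 := (hF S r).2 hrS
        rw [← hST, h0] at h1
        exact zero_ne_one h1
    have hcard : Cardinal.mk (Set R) ≤ Cardinal.mk (Polynomial R) :=
      Cardinal.mk_le_of_injective hinj
    have hpoly : Cardinal.mk (Polynomial R) ≤ max (Cardinal.mk R) Cardinal.aleph0 :=
      Polynomial.cardinalMk_le_max
    have hR : max (Cardinal.mk R) Cardinal.aleph0 = Cardinal.mk R :=
      max_eq_left (Cardinal.aleph0_le_mk R)
    have : Cardinal.mk (Set R) ≤ Cardinal.mk R := by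
      rw [← hR]; exact hcard.trans hpoly
    rw [Cardinal.mk_set] at this
    exact absurd this (not_le.mpr (Cardinal.cantor _))
  -- Step 2: every nonzero element has a left inverse.
  have hleft : ∀ r : R, r ≠ 0 → ∃ s : R, s * r = 1 := by
    intro r hr
    obtain ⟨f, hf⟩ := h {0}
    have h0 : f.eval 0 = 1 := (hf 0).1 rfl
    have hr0 : f.eval r = 0 := (hf r).2 (by simpa using hr)
    have hc : f.coeff 0 = 1 := by rw [Polynomial.coeff_zero_eq_eval_zero]; exact h0
    have hdecomp : f.divX * Polynomial.X + Polynomial.C (f.coeff 0) = f :=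
      Polynomial.divX_mul_X_add f
    have : (f.divX).eval r * r + 1 = 0 := by
      have := congrArg (Polynomial.eval r) hdecomp
      rwa [Polynomial.eval_add, Polynomial.eval_mul_X, Polynomial.eval_C, hc, hr0] at this
    refine ⟨-(f.divX).eval r, ?_⟩
    have hu := eq_neg_of_add_eq_zero_left this
    rw [neg_mul, hu, neg_neg]
  -- Step 3: no zero divisors, hence a domain.
  have : NoZeroDivisors R := by
    constructor
    intro a b hab
    by_contra hcon
    push_neg at hcon
    obtain ⟨ha, hb⟩ := hcon
    obtain ⟨s, hs⟩ := hleft a ha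
    have : b = 0 := by
      calc b = (s * a) * b := by rw [hs, one_mul]
        _ = s * (a * b) := by rw [mul_assoc]
        _ = 0 := by rw [hab, mul_zero]
    exact hb this
  have : IsDomain R := NoZeroDivisors.to_isDomain R
  have hfield : IsField R := Finite.isDomain_to_isField R
  refine ⟨hfin, hfield.mul_comm, ?_⟩
  intro x hx
  obtain ⟨y, hy⟩ := hfield.mul_inv_cancel hx
  exact ⟨⟨x, y, hy, by rw [hfield.mul_comm]; exact hy⟩, rfl⟩
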